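/- Let f : I → I be continuous and let f_P be a P-linear map, where P is a periodic orbit. Let x and y be two distinct periodic points of f_P associated respectively to two distinct loops α and β in the P-signed Markov graph of f_P. Then x < y if and only if α < β in the lexicographic ordering of loops. Consequently, for every n ≥ 1, f_P^n(x) < f_P^n(y) if and only if S^n(α) < S^n(β). -/

import Mathlib

open Dynamics Set

noncomputable section

/-- The circle `S¹ = ℝ/ℤ`. -/
abbrev S1 : Type := AddCircle (1 : ℝ)

/-- The unit interval `I = [0,1]` as a type. -/
abbrev II : Type := Set.Icc (0 : ℝ) 1

/-- The cylinder `Ω = S¹ × I`. -/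
abbrev Cyl : Type := S1 × II

/-- The fiber of a subset of the cylinder over `θ ∈ S¹`. -/
def fiber (A : Set Cyl) (θ : S1) : Set II := {x : II | (θ, x) ∈ A}

/-- `M_A θ = max {x ∈ I : (θ, x) ∈ A}`. -/
def MA (A : Set Cyl) (θ : S1) : ℝ := sSup (Subtype.val '' fiber A θ)

/-- `m_A θ = min {x ∈ I : (θ, x) ∈ A}`. -/
def mA (A : Set Cyl) (θ : S1) : ℝ := sInf (Subtype.val '' fiber A θ)

/-- A strip: a closed set projecting onto all of `S¹` whose fibers over a residual
set of `θ`'s are (possibly degenerate) nonempty closed intervals. -/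
def IsStrip (A : Set Cyl) : Prop :=
  IsClosed A ∧ (∀ θ : S1, ∃ x : II, (θ, x) ∈ A) ∧
    ∃ G ∈ residual S1, ∀ θ ∈ G, ∃ a b : II, a ≤ b ∧ fiber A θ = Set.Icc a b

/-- `A < B` for strips. -/
def stripLT (A B : Set Cyl) : Prop := ∃ G ∈ residual S1, ∀ θ ∈ G, MA A θ < mA B θ

/-- `A ≤ B` for strips. -/
def stripLE (A B : Set Cyl) : Prop := ∃ G ∈ residual S1, ∀ θ ∈ G, MA A θ ≤ mA B θ

/-- Two strips are ordered if `A < B` or `B < A`. -/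
def StripOrdered (A B : Set Cyl) : Prop := stripLT A B ∨ stripLT B A

/-- Two strips are weakly ordered if `A ≤ B` or `B ≤ A`. -/
def StripWeaklyOrdered (A B : Set Cyl) : Prop := stripLE A B ∨ stripLE B A

/-- The class `S(Ω)` of quasiperiodically forced skew-products on the cylinder:
continuous maps whose first coordinate is an irrational rotation. -/
def IsQPF (F : Cyl → Cyl) : Prop :=
  Continuous F ∧ ∃ ω : ℝ, Irrational ω ∧ ∀ p : Cyl, (F p).1 = p.1 + (ω : S1)

/-- `B` is an `n`-periodic strip of `F`: `F^n(B) = B` and the iterates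
`B, F(B), …, F^{n-1}(B)` are pairwise disjoint and pairwise ordered. -/
def IsPeriodicStripOrbit (F : Cyl → Cyl) (n : ℕ) (B : Set Cyl) : Prop :=
  IsStrip B ∧ F^[n] '' B = B ∧
    ∀ i j : ℕ, i < j → j < n →
      Disjoint (F^[i] '' B) (F^[j] '' B) ∧ StripOrdered (F^[i] '' B) (F^[j] '' B)

/-- A cyclic permutation: the (forward) orbit of any point is everything. -/
def IsCyclicPerm {n : ℕ} (τ : Equiv.Perm (Fin n)) : Prop :=
  ∀ i j : Fin n, ∃ k : ℕ, (τ ^ k) i = j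

/-- `F` exhibits the strips pattern `τ`: it has a periodic orbit of strips,
spatially labelled, moved around according to `τ`. -/
def ExhibitsStripPattern (F : Cyl → Cyl) {n : ℕ} (τ : Equiv.Perm (Fin n)) : Prop :=
  ∃ B : Fin n → Set Cyl,
    (∀ i, IsStrip (B i)) ∧
    (∀ i j : Fin n, i < j → stripLT (B i) (B j)) ∧
    (Pairwise fun i j => Disjoint (B i) (B j)) ∧
    (∀ i, F '' B i = B (τ i))

/-- A continuous interval map has a periodic orbit with interval pattern `τ`. -/
def HasIntervalPattern (f : II → II) {n : ℕ} (τ : Equiv.Perm (Fin n)) : Prop :=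
  ∃ p : Fin n → II, StrictMono p ∧ ∀ i, f (p i) = p (τ i)

/-- `τ` forces `ν` as interval patterns. -/
def ForcesI {n m : ℕ} (τ : Equiv.Perm (Fin n)) (ν : Equiv.Perm (Fin m)) : Prop :=
  ∀ f : II → II, Continuous f → HasIntervalPattern f τ → HasIntervalPattern f ν

/-- `τ` forces `ν` in `Ω`. -/
def ForcesOmega {n m : ℕ} (τ : Equiv.Perm (Fin n)) (ν : Equiv.Perm (Fin m)) : Prop :=
  ∀ F : Cyl → Cyl, IsQPF F → ExhibitsStripPattern F τ → ExhibitsStripPattern F ν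

/-- `p >_Sh q` in the Sharkovskiĭ ordering. -/
def SharkGT (p q : ℕ) : Prop :=
  ∃ i m j l : ℕ, Odd m ∧ Odd l ∧ p = 2 ^ i * m ∧ q = 2 ^ j * l ∧
    ((m = 1 ∧ l = 1 ∧ j < i) ∨ (1 < m ∧ l = 1) ∨
      (1 < m ∧ 1 < l ∧ (i < j ∨ (i = j ∧ m < l))))

/-- The core of a subset of the cylinder. -/
def core (M : Set Cyl) : Set Cyl :=
  ⋂ (G : Set S1) (_ : G ∈ residual S1), closure (M ∩ Prod.fst ⁻¹' G)

/-- A band is a strip equal to its core. -/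
def IsBand (A : Set Cyl) : Prop := IsStrip A ∧ core A = A

/-- Continuity points of a real-valued function on the circle. -/
def contPts (g : S1 → ℝ) : Set S1 := {θ | ContinuousAt g θ}

/-- The top cover `A⁺` of a strip: the closure of the graph of `M_A` restricted to its
residual set of continuity points. -/
def topCover (A : Set Cyl) : Set Cyl :=
  closure {p : Cyl | p.1 ∈ contPts (MA A) ∧ (p.2 : ℝ) = MA A p.1}

/-- The bottom cover `A⁻` of a strip. -/
def botCover (A : Set Cyl) : Set Cyl :=
  closure {p : Cyl | p.1 ∈ contPts (mA A) ∧ (p.2 : ℝ) = mA A p.1}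

/-- `A` positively `F`-covers `B`. -/
def FCoversPos (F : Cyl → Cyl) (A B : Set Cyl) : Prop :=
  stripLE (F '' botCover A) (botCover B) ∧ stripLE (topCover B) (F '' topCover A)

/-- `A` negatively `F`-covers `B`. -/
def FCoversNeg (F : Cyl → Cyl) (A B : Set Cyl) : Prop :=
  stripLE (topCover B) (F '' botCover A) ∧ stripLE (F '' topCover A) (botCover B)

/-- `A` `F`-covers `B`. -/
def FCovers (F : Cyl → Cyl) (A B : Set Cyl) : Prop := FCoversPos F A B ∨ FCoversNeg F A B

/-- An `s`-horseshoe `(J, D)` for `F`. -/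
def IsHorseshoe (F : Cyl → Cyl) (s : ℕ) (J : Set Cyl) (D : Finset (Set Cyl)) : Prop :=
  2 ≤ s ∧ D.card = s ∧ IsBand J ∧
    (∀ L ∈ D, IsBand L ∧ (interior L).Nonempty ∧ FCovers F L J) ∧
    (∀ L ∈ D, ∀ L' ∈ D, L ≠ L' → StripWeaklyOrdered L L')

/-- Topological entropy (cover entropy of the whole space). -/
def hTop {X : Type} [UniformSpace X] (F : X → X) : EReal := coverEntropy F Set.univ

/-- A pseudo-curve: the closure of the graph of a continuous map from a residual
subset of the circle to the interval. -/
def IsPseudoCurve (A : Set Cyl) : Prop :=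
  ∃ G ∈ residual S1, ∃ φ : S1 → II, Continuous (G.restrict φ) ∧
    A = closure {p : Cyl | p.1 ∈ G ∧ p.2 = φ p.1}

/-- The band `E_{AB}` between two pseudo-curves `A < B`. -/
def bandBetween (A B : Set Cyl) : Set Cyl :=
  closure {p : Cyl | p.1 ∈ contPts (MA A) ∧ p.1 ∈ contPts (mA B) ∧
    MA A p.1 < (p.2 : ℝ) ∧ (p.2 : ℝ) < mA B p.1}

/-- `f` is affine on the subinterval `[a, b]` of `I`. -/
def AffineOnIcc (f : II → II) (a b : II) : Prop :=
  ∀ x : II, a ≤ x → x ≤ b →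
    ((b : ℝ) - (a : ℝ)) * ((f x : ℝ) - (f a : ℝ)) =
      ((x : ℝ) - (a : ℝ)) * ((f b : ℝ) - (f a : ℝ))

/-- `f` is the `P`-linear (connect-the-dots) map over the points `p 0 < p 1 < … < p n`:
continuous, affine on each `[p i, p (i+1)]` and constant on both components of
`I ∖ [p 0, p n]`. -/
def IsPLinear {n : ℕ} (f : II → II) (p : Fin (n + 1) → II) : Prop :=
  Continuous f ∧
    (∀ k : Fin n, AffineOnIcc f (p k.castSucc) (p k.succ)) ∧
    (∀ x : II, x ≤ p 0 → f x = f (p 0)) ∧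
    (∀ x : II, p (Fin.last n) ≤ x → f x = f (p (Fin.last n)))

/-- Signed arrow between basic intervals `J_k = [p k, p (k+1)]` and `J_l` in the
`P`-signed Markov graph of `f` (`true` = positive covering, `false` = negative). -/
def IArrow {n : ℕ} (f : II → II) (p : Fin (n + 1) → II) (s : Bool) (k l : Fin n) : Prop :=
  if s then
    (f (p k.castSucc) : ℝ) ≤ (p l.castSucc : ℝ) ∧ (p l.succ : ℝ) ≤ (f (p k.succ) : ℝ)
  else
    (f (p k.succ) : ℝ) ≤ (p l.castSucc : ℝ) ∧ (p l.succ : ℝ) ≤ (f (p k.castSucc) : ℝ)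

/-- A loop of length `m` in the `P`-signed Markov graph of `f`, encoded as `m`-periodic
sequences of vertices (basic intervals) and signs. -/
def IsILoop {n : ℕ} (f : II → II) (p : Fin (n + 1) → II) (m : ℕ)
    (v : ℕ → Fin n) (s : ℕ → Bool) : Prop :=
  0 < m ∧ (∀ i, v (i + m) = v i) ∧ (∀ i, s (i + m) = s i) ∧
    ∀ i, IArrow f p (s i) (v i) (v (i + 1))

/-- A periodic point `x` of (exact) period `m` is associated to the loop with vertex
sequence `v` if `f^i(x) ∈ J_{v i}` for all `i`. -/
def IAssocPt {n : ℕ} (f : II → II) (p : Fin (n + 1) → II) (m : ℕ)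
    (x : II) (v : ℕ → Fin n) : Prop :=
  f^[m] x = x ∧ (∀ i : ℕ, 0 < i → i < m → f^[i] x ≠ x) ∧
    ∀ i : ℕ, p (v i).castSucc ≤ f^[i] x ∧ f^[i] x ≤ p (v i).succ

/-- The sign (`true` = `+`) of the initial segment of length `k` of a signed path. -/
def signAt (s : ℕ → Bool) (k : ℕ) : Bool :=
  decide (Even ((Finset.range k).filter (fun i => s i = false)).card)

/-- Lexicographic ordering of (infinite liftings of) signed paths, comparing the vertex
sequences `v` and `w`; at the first difference the comparison is reversed iff the sign
of the common initial segment is negative. -/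
def seqLT {n : ℕ} (v : ℕ → Fin n) (s : ℕ → Bool) (w : ℕ → Fin n) : Prop :=
  ∃ k : ℕ, (∀ i < k, v i = w i) ∧ v k ≠ w k ∧ (v k < w k ↔ signAt s k = true)

/-- The shift of a sequence by `i`. -/
def shiftSeq {α : Type} (v : ℕ → α) (i : ℕ) : ℕ → α := fun j => v (i + j)

/-- A loop of length `m` (given by `m`-periodic sequences) is simple if it is not the
repetition of a shorter loop. -/
def SimpleLoop {α β : Type} (m : ℕ) (v : ℕ → α) (s : ℕ → β) : Prop :=
  ¬ ∃ d : ℕ, 0 < d ∧ d < m ∧ d ∣ m ∧ (∀ i, v (i + d) = v i) ∧ (∀ i, s (i + d) = s i)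

/-- The basic bands associated to a (spatially labelled) periodic orbit of strips
`B 0 < B 1 < … < B n`: `I_{B_k B_{k+1}} = E_{(B_k)⁺ (B_{k+1})⁻}`. -/
def basicBand {n : ℕ} (B : Fin (n + 1) → Set Cyl) (k : Fin n) : Set Cyl :=
  bandBetween (topCover (B k.castSucc)) (botCover (B k.succ))

/-- Signed arrow between bands in a signed Markov graph of `F`. -/
def BArrow (F : Cyl → Cyl) (s : Bool) (A B : Set Cyl) : Prop :=
  if s then FCoversPos F A B else FCoversNeg F A B

/-- A loop of length `m` in the signed Markov graph of `F` over the basic bands of the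
periodic orbit of strips `B`. -/
def IsBLoop (F : Cyl → Cyl) {n : ℕ} (B : Fin (n + 1) → Set Cyl) (m : ℕ)
    (v : ℕ → Fin n) (s : ℕ → Bool) : Prop :=
  0 < m ∧ (∀ i, v (i + m) = v i) ∧ (∀ i, s (i + m) = s i) ∧
    ∀ i, BArrow F (s i) (basicBand B (v i)) (basicBand B (v (i + 1)))

/-- Equality of patterns given as cyclic permutations of possibly different index sets. -/
def PatternEqNat {a b : ℕ} (τ : Equiv.Perm (Fin a)) (ν : Equiv.Perm (Fin b)) : Prop :=
  a = b ∧ ∀ (i : Fin a) (j : Fin b), (i : ℕ) = (j : ℕ) → ((τ i : ℕ) = (ν j : ℕ))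

/-- The entropy of a strips pattern: the infimum of the entropies of the maps in `S(Ω)`
exhibiting it. -/
def patternEntropy {n : ℕ} (τ : Equiv.Perm (Fin n)) : EReal :=
  sInf {e : EReal | ∃ F : Cyl → Cyl, IsQPF F ∧ ExhibitsStripPattern F τ ∧ e = hTop F}

end

section AuxOrderProof

open Function

/-- A periodic sequence is periodic for multiples of the period. -/
lemma seq_per_mul {α : Type} {v : ℕ → α} {m : ℕ} (h : ∀ i, v (i + m) = v i) :
    ∀ c i, v (i + c * m) = v i := by
  intro c
  induction c with
  | zero => simp
  | succ c ih =>
    intro i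
    have : i + (c + 1) * m = (i + c * m) + m := by ring
    rw [this, h, ih]

lemma iter_fix_mul {f : II → II} {x : II} {m : ℕ} (h : f^[m] x = x) :
    ∀ c, f^[c * m] x = x := by
  intro c
  rw [mul_comm, Function.iterate_mul]
  exact Function.iterate_fixed h c

/-- Iterates of two distinct periodic points never meet. -/
lemma iter_ne_of_periodic {f : II → II} {x y : II} (hxy : x ≠ y)
    {mx my : ℕ} (hmx : 0 < mx) (hmy : 0 < my)
    (hxfix : f^[mx] x = x) (hyfix : f^[my] y = y) :
    ∀ k, f^[k] x ≠ f^[k] y := by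
  intro k h
  apply hxy
  set M := (my * (k + 1)) * mx with hM
  have hMx : f^[M] x = x := iter_fix_mul hxfix _
  have hMy : f^[M] y = y := by
    have : M = (mx * (k + 1)) * my := by rw [hM]; ring
    rw [this]; exact iter_fix_mul hyfix _
  have hkM : k ≤ M := by
    calc k ≤ k + 1 := Nat.le_succ k
    _ = 1 * (k + 1) * 1 := by ring
    _ ≤ (my * (k+1)) * mx := Nat.mul_le_mul (Nat.mul_le_mul hmy le_rfl) hmx
  have hsplit : M = (M - k) + k := by omega
  have : f^[M] x = f^[M] y := by
    rw [hsplit, Function.iterate_add_apply, Function.iterate_add_apply, h]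
  rw [hMx, hMy] at this
  exact this

/-- Arrows between the same pair of vertices have the same sign. -/
lemma arrow_sign_unique {n : ℕ} {f : II → II} {p : Fin (n + 1) → II}
    (hp : StrictMono p) {s1 s2 : Bool} {a b : Fin n}
    (h1 : IArrow f p s1 a b) (h2 : IArrow f p s2 a b) : s1 = s2 := by
  have hb : ((p b.castSucc : ℝ)) < (p b.succ : ℝ) := hp (Fin.castSucc_lt_succ (i := b))
  cases s1 <;> cases s2 <;> (try rfl) <;>
    simp only [IArrow, if_true, Bool.false_eq_true, if_false, ite_true, ite_false] at h1 h2 <;>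
    exfalso <;> linarith [h1.1, h1.2, h2.1, h2.2]

lemma signAt_zero (s : ℕ → Bool) : signAt s 0 = true := by
  simp [signAt]

lemma signAt_succ (s : ℕ → Bool) (i : ℕ) :
    (signAt s (i + 1) = true) ↔ ((signAt s i = true) ↔ (s i = true)) := by
  simp only [signAt, Finset.range_add_one, Finset.filter_insert, decide_eq_true_eq]
  cases hsi : s i with
  | false =>
    rw [if_pos rfl, Finset.card_insert_of_notMem (by simp)]
    simp [Nat.even_add_one]
  | true =>
    rw [if_neg (by simp)]
    simp

lemma iff_step {D1 D0 P G G1 S : Prop} (hA : D0 ↔ (P ↔ G)) (hB : D1 ↔ (D0 ↔ S))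
    (hC : G1 ↔ (G ↔ S)) : D1 ↔ (P ↔ G1) := by tauto

lemma iff_assemble {P Q W : Prop} (h : W ↔ (P ↔ Q)) : (¬ P) ↔ ((¬ W) ↔ Q) := by tauto

/-- Main lemma: order of associated periodic points equals lexicographic order of loops. -/
lemma key_order {n : ℕ}
    (f : II → II) (p : Fin (n + 1) → II) (hp : StrictMono p) (hlin : IsPLinear f p)
    (x y : II) (hxy : x ≠ y)
    (mx my : ℕ) (v w : ℕ → Fin n) (s t : ℕ → Bool)
    (hα : IsILoop f p mx v s) (hβ : IsILoop f p my w t)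
    (hx : IAssocPt f p mx x v) (hy : IAssocPt f p my y w)
    (hdist : ∃ i : ℕ, v i ≠ w i) :
    x < y ↔ seqLT v s w := by
  obtain ⟨hmx, hvper, hsper, harr⟩ := hα
  obtain ⟨hmy, hwper, htper, harr'⟩ := hβ
  obtain ⟨hxfix, hxmin, hxit⟩ := hx
  obtain ⟨hyfix, hymin, hyit⟩ := hy
  classical
  obtain ⟨k, hk, hkmin⟩ : ∃ k, v k ≠ w k ∧ ∀ i < k, v i = w i :=
    ⟨Nat.find hdist, Nat.find_spec hdist, fun i hi => not_not.mp (Nat.find_min hdist hi)⟩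
  set d : ℕ → ℝ := fun i => ((f^[i] x : ℝ)) - ((f^[i] y : ℝ)) with hd
  have hdne : ∀ i, d i ≠ 0 := by
    intro i h
    have : f^[i] x = f^[i] y := by
      apply Subtype.ext
      have : ((f^[i] x : ℝ)) - ((f^[i] y : ℝ)) = 0 := h
      linarith
    exact iter_ne_of_periodic hxy hmx hmy hxfix hyfix i this
  -- the basic covering step
  have step : ∀ i, v i = w i → ((0 < d (i + 1)) ↔ ((0 < d i) ↔ s i = true)) := by
    intro i hvw
    set A : II := p (v i).castSucc with hA
    set B : II := p (v i).succ with hB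
    have hAB : (A : ℝ) < (B : ℝ) := hp (Fin.castSucc_lt_succ (i := v i))
    have hXA : A ≤ f^[i] x := (hxit i).1
    have hXB : f^[i] x ≤ B := (hxit i).2
    have hYA : A ≤ f^[i] y := by rw [hA, hvw]; exact (hyit i).1
    have hYB : f^[i] y ≤ B := by rw [hB, hvw]; exact (hyit i).2
    have e1 := hlin.2.1 (v i) (f^[i] x) hXA hXB
    have e2 := hlin.2.1 (v i) (f^[i] y) hYA hYB
    have heq : ((B : ℝ) - A) * d (i + 1) = d i * ((f B : ℝ) - (f A : ℝ)) := by
      have hx1 : f^[i+1] x = f (f^[i] x) := Function.iterate_succ_apply' f i x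
      have hy1 : f^[i+1] y = f (f^[i] y) := Function.iterate_succ_apply' f i y
      simp only [hd, hx1, hy1]
      linear_combination e1 - e2
    have harri := harr i
    have hbb : ((p (v (i+1)).castSucc : ℝ)) < (p (v (i+1)).succ : ℝ) :=
      hp (Fin.castSucc_lt_succ (i := v (i+1)))
    cases hsi : s i with
    | true =>
      rw [hsi] at harri
      simp only [IArrow, if_true, ite_true] at harri
      have hΔ : 0 < (f B : ℝ) - (f A : ℝ) := by
        have h1 : (f A : ℝ) ≤ (p (v (i+1)).castSucc : ℝ) := harri.1
        have h2 : ((p (v (i+1)).succ : ℝ)) ≤ (f B : ℝ) := harri.2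
        linarith
      simp only [eq_self_iff_true, iff_true]
      constructor
      · intro h; nlinarith
      · intro h; nlinarith
    | false =>
      rw [hsi] at harri
      simp only [IArrow, Bool.false_eq_true, if_false, ite_false] at harri
      have hΔ : (f B : ℝ) - (f A : ℝ) < 0 := by
        have h1 : (f B : ℝ) ≤ (p (v (i+1)).castSucc : ℝ) := harri.1
        have h2 : ((p (v (i+1)).succ : ℝ)) ≤ (f A : ℝ) := harri.2
        linarith
      have hdi := hdne i
      simp only [Bool.false_eq_true, iff_false]
      constructor
      · intro h h'; nlinarith
      · intro h
        have : d i < 0 := lt_of_le_of_ne (not_lt.mp h) hdi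
        nlinarith
  -- invariant
  have inv : ∀ i ≤ k, ((0 < d i) ↔ ((0 < d 0) ↔ signAt s i = true)) := by
    intro i
    induction i with
    | zero => intro _; simp [signAt_zero]
    | succ i ih =>
      intro hik
      have hi : i < k := Nat.lt_of_succ_le hik
      exact iff_step (ih (le_of_lt hi)) (step i (hkmin i hi)) (signAt_succ s i)
  -- sign at k
  have hvwk : v k < w k ∨ w k < v k := lt_or_gt_of_ne hk
  have hdk : (0 < d k) ↔ w k < v k := by
    rcases hvwk with h | h
    · have hle : ((f^[k] x : ℝ)) ≤ ((f^[k] y : ℝ)) := by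
        have h1 : ((f^[k] x : ℝ)) ≤ (p (v k).succ : ℝ) := (hxit k).2
        have h2 : ((p (v k).succ : ℝ)) ≤ (p (w k).castSucc : ℝ) := by
          rcases eq_or_lt_of_le (show (v k).succ ≤ (w k).castSucc by
            rw [Fin.le_def, Fin.val_succ, Fin.coe_castSucc]
            have := Fin.lt_def.mp h; omega) with he | hlt
          · rw [he]
          · exact le_of_lt (hp hlt)
        have h3 : ((p (w k).castSucc : ℝ)) ≤ ((f^[k] y : ℝ)) := (hyit k).1
        linarith
      constructor
      · intro hpos; exfalso
        have hdk0 : d k ≤ 0 := by simp only [hd]; linarith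
        linarith
      · intro h'; exact absurd h' (asymm h)
    · have hle : ((f^[k] y : ℝ)) ≤ ((f^[k] x : ℝ)) := by
        have h1 : ((f^[k] y : ℝ)) ≤ (p (w k).succ : ℝ) := (hyit k).2
        have h2 : ((p (w k).succ : ℝ)) ≤ (p (v k).castSucc : ℝ) := by
          rcases eq_or_lt_of_le (show (w k).succ ≤ (v k).castSucc by
            rw [Fin.le_def, Fin.val_succ, Fin.coe_castSucc]
            have := Fin.lt_def.mp h; omega) with he | hlt
          · rw [he]
          · exact le_of_lt (hp hlt)
        have h3 : ((p (v k).castSucc : ℝ)) ≤ ((f^[k] x : ℝ)) := (hxit k).1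
        linarith
      have : 0 < d k := lt_of_le_of_ne (by simp only [hd]; linarith) (Ne.symm (hdne k))
      tauto
  -- seqLT characterization
  have hseq : seqLT v s w ↔ (v k < w k ↔ signAt s k = true) := by
    constructor
    · rintro ⟨k', h1, h2, h3⟩
      have : k' = k := by
        by_contra hne
        rcases Nat.lt_or_ge k' k with hlt | hge
        · exact h2 (hkmin k' hlt)
        · have : k < k' := lt_of_le_of_ne hge (Ne.symm hne)
          exact hk (h1 k this)
      rwa [this] at h3
    · intro h; exact ⟨k, hkmin, hk, h⟩
  -- assemble
  have hx0 : (x < y) ↔ d 0 < 0 := by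
    simp only [hd, Function.iterate_zero_apply]
    exact ⟨fun h => by simpa using sub_neg.mpr (Subtype.coe_lt_coe.mpr h),
      fun h => Subtype.coe_lt_coe.mp (by linarith)⟩
  have hinvk := inv k le_rfl
  have hd0 := hdne 0
  have htri : d 0 < 0 ↔ ¬ (0 < d 0) := by
    constructor
    · intro h h'; linarith
    · intro h; exact lt_of_le_of_ne (not_lt.mp h) hd0
  have hvtri : v k < w k ↔ ¬ (w k < v k) := by
    constructor
    · intro h h'; exact absurd h' (asymm h)
    · intro h; rcases hvwk with h' | h'; exact h'; exact absurd h' h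
  rw [hx0, hseq, htri, hvtri]
  exact iff_assemble (hdk.symm.trans hinvk)

lemma shift_loop {n : ℕ} {f : II → II} {p : Fin (n + 1) → II} {m N : ℕ}
    {v : ℕ → Fin n} {s : ℕ → Bool} (h : IsILoop f p m v s) :
    IsILoop f p m (shiftSeq v N) (shiftSeq s N) := by
  obtain ⟨hm, hv, hs, ha⟩ := h
  refine ⟨hm, fun i => ?_, fun i => ?_, fun i => ?_⟩
  · show v (N + (i + m)) = v (N + i); rw [← add_assoc]; exact hv (N + i)
  · show s (N + (i + m)) = s (N + i); rw [← add_assoc]; exact hs (N + i)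
  · show IArrow f p (s (N + i)) (v (N + i)) (v (N + (i + 1)))
    rw [← add_assoc]; exact ha (N + i)

lemma shift_assoc {n : ℕ} {f : II → II} {p : Fin (n + 1) → II} {m N : ℕ} {x : II}
    {v : ℕ → Fin n} (hm : 0 < m) (h : IAssocPt f p m x v) :
    IAssocPt f p m (f^[N] x) (shiftSeq v N) := by
  obtain ⟨hfix, hmin, hit⟩ := h
  refine ⟨?_, ?_, fun i => ?_⟩
  · rw [← Function.iterate_add_apply, add_comm, Function.iterate_add_apply, hfix]
  · intro i hi0 him heq
    apply hmin i hi0 him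
    have heq' : f^[i + N] x = f^[N] x := by
      rw [Function.iterate_add_apply]; exact heq
    set M := (N + 1) * m with hM
    have hMx : f^[M] x = x := iter_fix_mul hfix (N + 1)
    have hNM : N ≤ M := by
      have h1 : N + 1 ≤ (N + 1) * m := Nat.le_mul_of_pos_right (N + 1) hm
      omega
    calc f^[i] x = f^[i] (f^[M] x) := by rw [hMx]
    _ = f^[(M - N) + (N + i)] x := by rw [← Function.iterate_add_apply]; congr 1; omega
    _ = f^[M - N] (f^[N + i] x) := Function.iterate_add_apply f (M - N) (N + i) x
    _ = f^[M - N] (f^[N] x) := by rw [show N + i = i + N by ring, heq']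
    _ = f^[M] x := by rw [← Function.iterate_add_apply]; congr 1; omega
    _ = x := hMx
  · show p (v (N + i)).castSucc ≤ f^[i] (f^[N] x) ∧ f^[i] (f^[N] x) ≤ p (v (N + i)).succ
    rw [← Function.iterate_add_apply, add_comm i N]
    exact hit (N + i)

end AuxOrderProof

/-- the spatial order of periodic points of a `P`-linear map associated
to distinct loops agrees with the lexicographic order of the loops, and likewise for
all iterates and shifts. -/
theorem assoc_point_order_iff_loop_order {n : ℕ}
    (f : II → II) (p : Fin (n + 1) → II) (hp : StrictMono p)
    (τ : Equiv.Perm (Fin (n + 1))) (hτ : IsCyclicPerm τ)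
    (hporb : ∀ i, f (p i) = p (τ i)) (hlin : IsPLinear f p)
    (x y : II) (hxy : x ≠ y)
    (mx my : ℕ) (v w : ℕ → Fin n) (s t : ℕ → Bool)
    (hα : IsILoop f p mx v s) (hβ : IsILoop f p my w t)
    (hx : IAssocPt f p mx x v) (hy : IAssocPt f p my y w)
    (hdist : ∃ i : ℕ, v i ≠ w i ∨ s i ≠ t i) :
    (x < y ↔ seqLT v s w) ∧
    ∀ N : ℕ, 1 ≤ N →
      (f^[N] x < f^[N] y ↔ seqLT (shiftSeq v N) (shiftSeq s N) (shiftSeq w N)) := by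
  have hdistv : ∃ i, v i ≠ w i := by
    by_contra h
    push_neg at h
    obtain ⟨i, hi⟩ := hdist
    rcases hi with hv | hs
    · exact hv (h i)
    · apply hs
      have a1 := hα.2.2.2 i
      have a2 := hβ.2.2.2 i
      rw [← h i, ← h (i + 1)] at a2
      exact arrow_sign_unique hp a1 a2
  constructor
  · exact key_order f p hp hlin x y hxy mx my v w s t hα hβ hx hy hdistv
  · intro N _
    have hxy' : f^[N] x ≠ f^[N] y :=
      iter_ne_of_periodic hxy hα.1 hβ.1 hx.1 hy.1 N
    have hdist' : ∃ i, shiftSeq v N i ≠ shiftSeq w N i := by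
      obtain ⟨i0, hi0⟩ := hdistv
      have hKpos : 0 < mx * my := Nat.mul_pos hα.1 hβ.1
      have hNK : N ≤ N * (mx * my) := Nat.le_mul_of_pos_right N hKpos
      refine ⟨i0 + N * (mx * my) - N, ?_⟩
      have hNj : N + (i0 + N * (mx * my) - N) = i0 + N * (mx * my) := by omega
      simp only [shiftSeq]
      rw [hNj]
      have e1 : v (i0 + N * (mx * my)) = v i0 := by
        rw [show i0 + N * (mx * my) = i0 + (N * my) * mx by ring]
        exact seq_per_mul hα.2.1 (N * my) i0
      have e2 : w (i0 + N * (mx * my)) = w i0 := by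
        rw [show i0 + N * (mx * my) = i0 + (N * mx) * my by ring]
        exact seq_per_mul hβ.2.1 (N * mx) i0
      rw [e1, e2]; exact hi0
    exact key_order f p hp hlin _ _ hxy' mx my _ _ _ _ (shift_loop hα) (shift_loop hβ)
      (shift_assoc hα.1 hx) (shift_assoc hβ.1 hy) hdist'
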